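/- arXiv:2102.09288 — 2 statements merged into one kernel-verified Lean document; each statement's English description precedes it below -/
import Mathlib

section
/- There exists a real number λ₀ > 0 such that, for any two independent random variables X and Y on a probability space, each having the Poisson distribution with mean λ₀, one has ℙ(X = Y) = 1/3, ℙ(X > Y) = 1/3 and ℙ(X < Y) = 1/3. -/
open MeasureTheory ProbabilityTheory
open scoped NNReal ENNReal

noncomputable def F (x : ℝ) : ℝ := ∑' k : ℕ, (Real.exp (-x) * x ^ k / k.factorial) ^ 2

lemma term_eq (x : ℝ) (k : ℕ) :
    (Real.exp (-x) * x ^ k / k.factorial) ^ 2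
      = Real.exp (-(2*x)) * (x^2) ^ k / ((k.factorial : ℝ))^2 := by
  have h : Real.exp (-(2*x)) = Real.exp (-x) ^ 2 := by
    rw [← Real.exp_nat_mul]; ring_nf
  rw [h, div_pow, mul_pow, ← pow_mul, pow_mul']

lemma fact_one_le (k : ℕ) : (1:ℝ) ≤ (k.factorial : ℝ) := by
  exact_mod_cast Nat.one_le_iff_ne_zero.mpr k.factorial_ne_zero

lemma term_le {x : ℝ} (hx : 0 ≤ x) (k : ℕ) :
    (Real.exp (-x) * x ^ k / k.factorial) ^ 2 ≤ (x^2)^k / k.factorial := by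
  rw [term_eq]
  have h1 : Real.exp (-(2*x)) ≤ 1 := Real.exp_le_one_iff.mpr (by linarith)
  have h2 : (k.factorial : ℝ) ≤ ((k.factorial : ℝ))^2 := by nlinarith [fact_one_le k]
  have hp : (0:ℝ) ≤ (x^2)^k := by positivity
  have hf : (0:ℝ) < (k.factorial : ℝ) := lt_of_lt_of_le one_pos (fact_one_le k)
  calc Real.exp (-(2*x)) * (x^2) ^ k / ((k.factorial : ℝ))^2
      ≤ 1 * (x^2)^k / (k.factorial : ℝ) := by gcongr
    _ = (x^2)^k / k.factorial := by ring

lemma summable_sq {x : ℝ} (hx : 0 ≤ x) :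
    Summable (fun k : ℕ => (Real.exp (-x) * x ^ k / k.factorial) ^ 2) :=
  Summable.of_nonneg_of_le (fun _ => sq_nonneg _) (term_le hx)
    (Real.summable_pow_div_factorial (x^2))

lemma F_continuousOn : ContinuousOn F (Set.Icc (0:ℝ) 2) := by
  unfold F
  apply continuousOn_tsum (u := fun k : ℕ => ((4:ℝ)^k / k.factorial))
  · intro k
    exact (((Real.continuous_exp.comp continuous_neg).mul (continuous_pow k)).div_const
      _).pow 2 |>.continuousOn
  · exact Real.summable_pow_div_factorial 4
  · intro k x hx
    obtain ⟨hx0, hx2⟩ := hx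
    have hf : (0:ℝ) < (k.factorial : ℝ) := lt_of_lt_of_le one_pos (fact_one_le k)
    have h0 : 0 ≤ Real.exp (-x) * x ^ k / k.factorial := by positivity
    rw [Real.norm_eq_abs, abs_of_nonneg (by positivity)]
    have hb : Real.exp (-x) * x ^ k / k.factorial ≤ 2^k / k.factorial := by
      have h1 : Real.exp (-x) ≤ 1 := Real.exp_le_one_iff.mpr (by linarith)
      have h2 : x ^ k ≤ 2 ^ k := pow_le_pow_left₀ hx0 hx2 k
      calc Real.exp (-x) * x ^ k / k.factorial ≤ 1 * 2^k / k.factorial := by gcongr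
        _ = 2^k / k.factorial := by ring
    calc (Real.exp (-x) * x ^ k / k.factorial)^2 ≤ (2^k / (k.factorial:ℝ))^2 :=
          pow_le_pow_left₀ h0 hb 2
      _ = (4:ℝ)^k / ((k.factorial:ℝ))^2 := by
          rw [div_pow, ← pow_mul, pow_mul']; norm_num
      _ ≤ (4:ℝ)^k / k.factorial := by
          have h2 : (k.factorial : ℝ) ≤ ((k.factorial : ℝ))^2 := by nlinarith [fact_one_le k]
          gcongr

lemma F_zero : F 0 = 1 := by
  unfold F
  rw [tsum_eq_single 0]
  · norm_num
  · intro k hk; simp [zero_pow hk]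

lemma two_centralBinom_le : ∀ k : ℕ, 1 ≤ k → 2 * Nat.centralBinom k ≤ 4 ^ k := by
  intro k hk
  induction k with
  | zero => omega
  | succ n ih =>
    rcases Nat.eq_or_lt_of_le hk with h | h
    · simp [← h]; decide
    · have hn : 1 ≤ n := by omega
      have ihn := ih hn
      have key : (n+1) * (2 * Nat.centralBinom (n+1)) ≤ (n+1) * 4 ^ (n+1) := by
        calc (n+1) * (2 * Nat.centralBinom (n+1))
            = 2 * ((n+1) * Nat.centralBinom (n+1)) := by ring
          _ = 2 * (2 * (2*n+1) * Nat.centralBinom n) := by rw [Nat.succ_mul_centralBinom_succ]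
          _ = (2*(2*n+1)) * (2 * Nat.centralBinom n) := by ring
          _ ≤ (2*(2*n+1)) * 4 ^ n := Nat.mul_le_mul_left _ ihn
          _ ≤ (4*(n+1)) * 4 ^ n := Nat.mul_le_mul_right _ (by omega)
          _ = (n+1) * 4 ^ (n+1) := by ring
      exact Nat.le_of_mul_le_mul_left key (by omega)

lemma cb_fact (k : ℕ) : (Nat.centralBinom k : ℝ) * ((k.factorial : ℝ))^2 = ((2*k).factorial : ℝ) := by
  have := Nat.choose_mul_factorial_mul_factorial (show k ≤ 2*k by omega)
  have h2 : 2*k - k = k := by omega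
  rw [h2] at this
  have : Nat.centralBinom k * (k.factorial * k.factorial) = (2*k).factorial := by
    rw [Nat.centralBinom, ← this]; ring
  calc (Nat.centralBinom k : ℝ) * ((k.factorial : ℝ))^2
      = ((Nat.centralBinom k * (k.factorial * k.factorial) : ℕ) : ℝ) := by push_cast; ring
    _ = ((2*k).factorial : ℝ) := by rw [this]

lemma F_two_lt : F 2 < 1/3 := by
  have e4pos := Real.exp_pos (4:ℝ)
  have hterm : ∀ k : ℕ, (Real.exp (-2) * 2 ^ k / k.factorial) ^ 2
      ≤ Real.exp (-4) * 4^(2*k) / (2 * ((2*k).factorial : ℝ))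
        + (if k = 0 then Real.exp (-4)/2 else 0) := by
    intro k
    have hfe : (0:ℝ) < ((2*k).factorial : ℝ) := lt_of_lt_of_le one_pos (fact_one_le _)
    have heq : (Real.exp (-2) * 2 ^ k / k.factorial) ^ 2
        = Real.exp (-4) * (Nat.centralBinom k : ℝ) * 4^k / ((2*k).factorial : ℝ) := by
      rw [term_eq]
      have h4 : (-(2*(2:ℝ))) = -4 := by norm_num
      rw [h4]
      rw [← cb_fact k]
      have hfk : (0:ℝ) < ((k.factorial : ℝ))^2 := by positivity
      have hcb : (0:ℝ) < (Nat.centralBinom k : ℝ) := by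
        exact_mod_cast Nat.centralBinom_pos k
      field_simp
      ring
    rcases Nat.eq_zero_or_pos k with rfl | hk
    · simp [heq, Nat.centralBinom]
      ring_nf
      norm_num [Nat.factorial]
      rw [← Real.exp_nat_mul]; norm_num
    · have hcb2 : (Nat.centralBinom k : ℝ) ≤ 4^k / 2 := by
        have := two_centralBinom_le k hk
        have : ((2 * Nat.centralBinom k : ℕ) : ℝ) ≤ ((4^k : ℕ) : ℝ) := by exact_mod_cast this
        push_cast at this
        linarith
      rw [heq, if_neg (by omega)]
      have h4k : (0:ℝ) < 4^k := by positivity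
      calc Real.exp (-4) * (Nat.centralBinom k : ℝ) * 4^k / ((2*k).factorial : ℝ)
          ≤ Real.exp (-4) * (4^k/2) * 4^k / ((2*k).factorial : ℝ) := by gcongr
        _ = Real.exp (-4) * 4^(2*k) / (2 * ((2*k).factorial : ℝ)) := by
            rw [two_mul, pow_add]; ring
      simp
  have hs1 : Summable (fun k : ℕ => Real.exp (-4) * 4^(2*k) / (2 * ((2*k).factorial : ℝ))) := by
    have := (Real.hasSum_cosh 4).summable
    have h := this.mul_left (Real.exp (-4)/2)
    convert h using 2 with k
    case e'_3 => rfl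
    have hfe : (0:ℝ) < ((2*k).factorial : ℝ) := lt_of_lt_of_le one_pos (fact_one_le _)
    field_simp
  have hs2 : Summable (fun k : ℕ => (if k = 0 then Real.exp (-4)/2 else 0)) :=
    (hasSum_ite_eq 0 (Real.exp (-4)/2)).summable
  have hsum1 : ∑' k : ℕ, Real.exp (-4) * 4^(2*k) / (2 * ((2*k).factorial : ℝ))
      = Real.exp (-4)/2 * Real.cosh 4 := by
    have h := (Real.hasSum_cosh 4).mul_left (Real.exp (-4)/2)
    rw [← h.tsum_eq]
    congr 1 with k
    have hfe : (0:ℝ) < ((2*k).factorial : ℝ) := lt_of_lt_of_le one_pos (fact_one_le _)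
    field_simp
  have hsum2 : ∑' k : ℕ, (if k = 0 then Real.exp (-4)/2 else 0) = Real.exp (-4)/2 :=
    (hasSum_ite_eq 0 (Real.exp (-4)/2)).tsum_eq
  have hF : F 2 ≤ Real.exp (-4)/2 * Real.cosh 4 + Real.exp (-4)/2 := by
    unfold F
    calc ∑' k : ℕ, (Real.exp (-2) * 2 ^ k / k.factorial) ^ 2
        ≤ ∑' k : ℕ, (Real.exp (-4) * 4^(2*k) / (2 * ((2*k).factorial : ℝ))
            + (if k = 0 then Real.exp (-4)/2 else 0)) :=
          Summable.tsum_le_tsum hterm (summable_sq (by norm_num)) (hs1.add hs2)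
      _ = Real.exp (-4)/2 * Real.cosh 4 + Real.exp (-4)/2 := by
          rw [Summable.tsum_add hs1 hs2, hsum1, hsum2]
  have he4 : (54:ℝ) < Real.exp 4 := by
    have h1 := Real.exp_one_gt_d9
    have h4 : Real.exp 4 = Real.exp 1 ^ 4 := by
      rw [← Real.exp_nat_mul]; norm_num
    calc (54:ℝ) < 2.7182818283^4 := by norm_num
      _ ≤ Real.exp 1 ^ 4 := pow_le_pow_left₀ (by norm_num) h1.le 4
      _ = Real.exp 4 := h4.symm
  have hen : Real.exp (-4) = 1 / Real.exp 4 := by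
    rw [Real.exp_neg]; ring
  have he4' : Real.exp (-4) < 1/54 := by
    rw [hen]
    apply div_lt_div_of_pos_left <;> norm_num <;> linarith
  have hcosh : Real.cosh 4 = (Real.exp 4 + Real.exp (-4))/2 := Real.cosh_eq 4
  have hEu : Real.exp (-4) * Real.exp 4 = 1 := by rw [← Real.exp_add]; norm_num
  have hkey : Real.exp (-4)/2 * Real.cosh 4 + Real.exp (-4)/2 < 1/3 := by
    rw [hcosh]
    nlinarith [hEu, he4', (Real.exp_pos (-4)).le,
      mul_lt_mul_of_pos_left he4' (Real.exp_pos (-4))]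
  linarith

lemma exists_l : ∃ l : ℝ, 0 < l ∧ F l = 1/3 := by
  have h := intermediate_value_Icc' (by norm_num : (0:ℝ) ≤ 2) F_continuousOn
  have hmem : (1/3 : ℝ) ∈ Set.Icc (F 2) (F 0) := by
    rw [F_zero]
    exact ⟨F_two_lt.le, by norm_num⟩
  obtain ⟨l, hl, hFl⟩ := h hmem
  refine ⟨l, ?_, hFl⟩
  rcases hl.1.eq_or_lt with rfl | h0
  · rw [F_zero] at hFl; norm_num at hFl
  · exact h0

lemma meas_all (s : Set (ℕ × ℕ)) : MeasurableSet s := s.to_countable.measurableSet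

lemma poissonPMF_apply (r : ℝ≥0) (k : ℕ) :
    poissonPMF r k = ENNReal.ofReal (poissonPMFReal r k) := rfl

lemma poissonMeasure_singleton (r : ℝ≥0) (k : ℕ) :
    poissonMeasure r {k} = ENNReal.ofReal (poissonPMFReal r k) := by
  rw [ProbabilityTheory.poissonMeasure_singleton]; rfl

lemma diag_measure (r : ℝ≥0)
    (hs : Summable (fun k : ℕ => poissonPMFReal r k ^ 2)) :
    ((poissonMeasure r).prod (poissonMeasure r)) {p : ℕ × ℕ | p.1 = p.2}
      = ENNReal.ofReal (∑' k : ℕ, poissonPMFReal r k ^ 2) := by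
  have hD : {p : ℕ × ℕ | p.1 = p.2} = ⋃ k : ℕ, ({k} ×ˢ {k} : Set (ℕ × ℕ)) := by
    ext ⟨a, b⟩
    simp [eq_comm, and_comm]
  rw [hD, measure_iUnion ?_ (fun k => meas_all _)]
  · rw [ENNReal.ofReal_tsum_of_nonneg (fun k => sq_nonneg _) hs]
    congr 1 with k
    rw [Measure.prod_prod, _root_.poissonMeasure_singleton, sq,
      ENNReal.ofReal_mul poissonPMFReal_nonneg]
  · intro i j hij
    simp only [Set.disjoint_left]
    rintro ⟨a, b⟩ ha hb
    simp only [Set.mem_prod, Set.mem_singleton_iff] at ha hb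
    exact hij (ha.1.symm.trans hb.1)

/-- There exists `λ₀ > 0` such that for any two independent `Poisson(λ₀)` random
variables `X, Y` on a probability space, a win, draw and loss are all equally likely:
`P(X = Y) = P(X > Y) = P(X < Y) = 1/3`. -/
theorem exists_lambda_equal_outcomes :
    ∃ lam₀ : NNReal, 0 < lam₀ ∧
      ∀ (Ω : Type) (_ : MeasurableSpace Ω) (P : Measure Ω), IsProbabilityMeasure P →
        ∀ (X Y : Ω → ℕ), IndepFun X Y P →
          Measure.map X P = poissonMeasure lam₀ →
          Measure.map Y P = poissonMeasure lam₀ →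
          P {ω | X ω = Y ω} = 1/3 ∧ P {ω | X ω > Y ω} = 1/3 ∧ P {ω | X ω < Y ω} = 1/3 := by
  obtain ⟨l, hl, hFl⟩ := exists_l
  refine ⟨⟨l, hl.le⟩, by exact_mod_cast hl, ?_⟩
  set lam₀ : ℝ≥0 := ⟨l, hl.le⟩ with hlam
  have hcoe : ((lam₀ : ℝ≥0) : ℝ) = l := rfl
  have hpmf : ∀ k : ℕ, poissonPMFReal lam₀ k = Real.exp (-l) * l ^ k / k.factorial := by
    intro k; rw [poissonPMFReal, hcoe]
  have hsum3 : ∑' k : ℕ, poissonPMFReal lam₀ k ^ 2 = 1/3 := by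
    rw [← hFl]; unfold F
    exact tsum_congr fun k => by rw [hpmf]
  have hsummable : Summable (fun k : ℕ => poissonPMFReal lam₀ k ^ 2) := by
    have := summable_sq hl.le
    apply this.congr
    intro k; rw [hpmf]
  intro Ω mΩ P hP X Y hindep hX hY
  haveI := hP
  set μ := poissonMeasure lam₀ with hμ
  have hXae : AEMeasurable X P := by
    by_contra h
    rw [Measure.map_of_not_aemeasurable h] at hX
    have h1 : μ Set.univ = 1 := measure_univ
    rw [← hX] at h1
    simp at h1
  have hYae : AEMeasurable Y P := by
    by_contra h
    rw [Measure.map_of_not_aemeasurable h] at hY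
    have h1 : μ Set.univ = 1 := measure_univ
    rw [← hY] at h1
    simp at h1
  have hmap : P.map (fun ω => (X ω, Y ω)) = μ.prod μ := by
    have h := (indepFun_iff_map_prod_eq_prod_map_map hXae hYae).mp hindep
    rw [hX, hY] at h
    exact h
  have hpre : ∀ S : Set (ℕ × ℕ), P ((fun ω => (X ω, Y ω)) ⁻¹' S) = (μ.prod μ) S := by
    intro S
    rw [← hmap, Measure.map_apply_of_aemeasurable (hXae.prodMk hYae) (meas_all S)]
  set D : Set (ℕ × ℕ) := {p | p.1 = p.2} with hDdef
  set G : Set (ℕ × ℕ) := {p | p.1 > p.2} with hGdef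
  set L : Set (ℕ × ℕ) := {p | p.1 < p.2} with hLdef
  have hPD : P {ω | X ω = Y ω} = (μ.prod μ) D := hpre D
  have hPG : P {ω | X ω > Y ω} = (μ.prod μ) G := hpre G
  have hPL : P {ω | X ω < Y ω} = (μ.prod μ) L := hpre L
  have third : ENNReal.ofReal ((1:ℝ)/3) = 1/3 := by
    rw [ENNReal.ofReal_div_of_pos (by norm_num)]
    norm_num
  have hD : (μ.prod μ) D = 1/3 := by
    rw [hμ, diag_measure lam₀ hsummable, hsum3, third]
  have hGL : (μ.prod μ) G = (μ.prod μ) L := by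
    have hswap : Prod.swap ⁻¹' G = L := by
      ext ⟨a, b⟩; simp [hGdef, hLdef]
    calc (μ.prod μ) G = (Measure.map Prod.swap (μ.prod μ)) G := by rw [Measure.prod_swap]
      _ = (μ.prod μ) (Prod.swap ⁻¹' G) := Measure.map_apply measurable_swap (meas_all G)
      _ = (μ.prod μ) L := by rw [hswap]
  have hdisjGL : Disjoint G L := by
    simp only [Set.disjoint_left]
    rintro ⟨a, b⟩ ha hb
    simp [hGdef, hLdef] at ha hb
    omega
  have hdisjD : Disjoint D (G ∪ L) := by
    simp only [Set.disjoint_left]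
    rintro ⟨a, b⟩ ha hb
    simp [hDdef, hGdef, hLdef] at ha hb
    omega
  have huniv : D ∪ (G ∪ L) = Set.univ := by
    ext ⟨a, b⟩
    simp [hDdef, hGdef, hLdef]
    omega
  have htri : (μ.prod μ) D + ((μ.prod μ) G + (μ.prod μ) L) = 1 := by
    rw [← measure_union hdisjGL (meas_all L), ← measure_union hdisjD (meas_all _), huniv,
      measure_univ]
  have hfin : (μ.prod μ) G ≠ ⊤ := measure_ne_top _ _
  have h3 : ((1:ℝ≥0∞)/3) + ((μ.prod μ) G + (μ.prod μ) G) = 1 := by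
    rw [← hD, ← htri, hGL]
  have hxr : ((μ.prod μ) G).toReal = 1/3 := by
    have := congrArg ENNReal.toReal h3
    rw [ENNReal.toReal_add (by norm_num) (ENNReal.add_ne_top.mpr ⟨hfin, hfin⟩),
      ENNReal.toReal_add hfin hfin, ENNReal.toReal_one, ENNReal.toReal_div] at this
    norm_num at this
    linarith
  have hG : (μ.prod μ) G = 1/3 := by
    rw [← ENNReal.ofReal_toReal hfin, hxr, third]
  exact ⟨by rw [hPD, hD], by rw [hPG, hG], by rw [hPL, ← hGL, hG]⟩
end

section
/- Define d(λ) = e^{-2λ} Σ_{k=0}^∞ λ^{2k} / (k!)² for λ ≥ 0. Then d(λ) tends to 0 as λ tends to +∞. -/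
/-- The probability of a draw between two independent `Poisson(λ)` random variables:
`d(λ) = e^{-2λ} ∑_{k} λ^{2k} / (k!)²`. -/
noncomputable def drawProb (lam : ℝ) : ℝ :=
  Real.exp (-2 * lam) * ∑' k : ℕ, lam ^ (2 * k) / (Nat.factorial k : ℝ) ^ 2

open Real Filter Nat

/-- Stirling lower bound: `√π ≤ stirlingSeq (n+1)`. -/
lemma sqrtPi_le_stirlingSeq (n : ℕ) : Real.sqrt π ≤ Stirling.stirlingSeq (n + 1) :=
  Stirling.stirlingSeq'_antitone.le_of_tendsto
    (Stirling.tendsto_stirlingSeq_sqrt_pi.comp (tendsto_add_atTop_nat 1)) n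

lemma factorial_lower (k : ℕ) (hk : 1 ≤ k) :
    Real.sqrt k * ((k : ℝ) / Real.exp 1) ^ k ≤ (k ! : ℝ) := by
  obtain ⟨n, rfl⟩ : ∃ n, k = n + 1 := ⟨k - 1, by omega⟩
  have h := sqrtPi_le_stirlingSeq n
  rw [Stirling.stirlingSeq] at h
  have hc : (0:ℝ) < ((n + 1 : ℕ) : ℝ) := by positivity
  have hpos : (0:ℝ) < Real.sqrt (2 * ((n + 1 : ℕ) : ℝ)) * (((n + 1 : ℕ) : ℝ) / Real.exp 1) ^ (n + 1) := by
    positivity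
  rw [le_div_iff₀ hpos] at h
  have hs : Real.sqrt ((n + 1 : ℕ) : ℝ) ≤ Real.sqrt π * Real.sqrt (2 * ((n + 1 : ℕ) : ℝ)) := by
    rw [← Real.sqrt_mul (by positivity)]
    apply Real.sqrt_le_sqrt
    nlinarith [Real.pi_gt_three, hc]
  have hpow : (0:ℝ) ≤ (((n + 1 : ℕ) : ℝ)/Real.exp 1) ^ (n + 1) := by positivity
  calc Real.sqrt ((n + 1 : ℕ) : ℝ) * (((n + 1 : ℕ) : ℝ)/Real.exp 1) ^ (n + 1)
      ≤ (Real.sqrt π * Real.sqrt (2 * ((n + 1 : ℕ) : ℝ))) * (((n + 1 : ℕ) : ℝ)/Real.exp 1) ^ (n + 1) :=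
        mul_le_mul_of_nonneg_right hs hpow
    _ = Real.sqrt π * (Real.sqrt (2 * ((n + 1 : ℕ) : ℝ)) * (((n + 1 : ℕ) : ℝ)/Real.exp 1) ^ (n + 1)) := by
        ring
    _ ≤ (((n + 1 : ℕ))! : ℝ) := h

/-- The Poisson pmf. -/
noncomputable def poissonPmf (lam : ℝ) (k : ℕ) : ℝ := Real.exp (-lam) * lam ^ k / k !

/-- A uniform bound on the Poisson pmf. -/
noncomputable def pmfBound (lam : ℝ) : ℝ :=
  Real.exp (-lam) + Real.exp (((Real.exp 1)⁻¹ - 1/2) * lam) + Real.sqrt 2 / Real.sqrt lam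

lemma pmfBound_tendsto_zero : Tendsto pmfBound atTop (nhds 0) := by
  have h1 : Tendsto (fun lam : ℝ => Real.exp (-lam)) atTop (nhds 0) := by
    simpa using Real.tendsto_exp_neg_atTop_nhds_zero
  have hc : ((Real.exp 1)⁻¹ - 1/2 : ℝ) < 0 := by
    have h9 := Real.exp_one_gt_d9
    have h : (0:ℝ) < Real.exp 1 := Real.exp_pos 1
    rw [sub_neg, inv_lt_iff_one_lt_mul₀ h]
    nlinarith
  have h2 : Tendsto (fun lam : ℝ => Real.exp (((Real.exp 1)⁻¹ - 1/2) * lam)) atTop (nhds 0) := by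
    apply Real.tendsto_exp_atBot.comp
    simpa using Tendsto.const_mul_atTop_of_neg hc (tendsto_id (α := ℝ))
  have hs : Tendsto Real.sqrt atTop atTop := by
    refine tendsto_atTop_atTop.2 fun b => ⟨(max b 0) ^ 2, fun a ha => ?_⟩
    have h := Real.sqrt_le_sqrt ha
    rw [Real.sqrt_sq (le_max_right b 0)] at h
    exact (le_max_left b 0).trans h
  have h3 : Tendsto (fun lam : ℝ => Real.sqrt 2 / Real.sqrt lam) atTop (nhds 0) := by
    simp only [div_eq_mul_inv]
    simpa using (hs.inv_tendsto_atTop).const_mul (Real.sqrt 2)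
  have h := (h1.add h2).add h3
  rw [show ((0:ℝ) + 0 + 0 : ℝ) = 0 by norm_num] at h
  exact h

lemma poissonPmf_le_pmfBound {lam : ℝ} (hlam : 2 ≤ lam) (k : ℕ) :
    poissonPmf lam k ≤ pmfBound lam := by
  have hlam0 : (0:ℝ) < lam := by linarith
  have hB1 : (0:ℝ) ≤ Real.exp (-lam) := (Real.exp_pos _).le
  have hB2 : (0:ℝ) ≤ Real.exp (((Real.exp 1)⁻¹ - 1/2) * lam) := (Real.exp_pos _).le
  have hB3 : (0:ℝ) ≤ Real.sqrt 2 / Real.sqrt lam := by positivity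
  rcases Nat.eq_zero_or_pos k with rfl | hk
  · simp only [poissonPmf, pow_zero, Nat.factorial_zero, Nat.cast_one, mul_one]
    unfold pmfBound
    rw [div_one]
    linarith
  · have hk1 : (1:ℝ) ≤ (k:ℝ) := by exact_mod_cast hk
    have hkpos : (0:ℝ) < (k:ℝ) := by linarith
    set L : ℝ := k * Real.log lam + k - k * Real.log k - lam with hLdef
    have hfac := factorial_lower k hk
    have hfacpos : (0:ℝ) < Real.sqrt k * ((k:ℝ) / Real.exp 1) ^ k := by positivity
    have hfacpos' : (0:ℝ) < (k ! : ℝ) := by exact_mod_cast k.factorial_pos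
    have hstep1 : poissonPmf lam k
        ≤ Real.exp (-lam) * lam ^ k / (Real.sqrt k * ((k:ℝ)/Real.exp 1) ^ k) :=
      div_le_div_of_nonneg_left (by positivity) hfacpos hfac
    have heq : Real.exp (-lam) * lam ^ k / (Real.sqrt k * ((k:ℝ)/Real.exp 1) ^ k)
        = Real.exp L / Real.sqrt k := by
      have hlamk : lam ^ k = Real.exp (k * Real.log lam) := by
        rw [Real.exp_nat_mul, Real.exp_log hlam0]
      have hkk : ((k:ℝ)/Real.exp 1) ^ k = Real.exp (k * Real.log k - k) := by
        have h0 : (k:ℝ)/Real.exp 1 = Real.exp (Real.log k - 1) := by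
          rw [Real.exp_sub, Real.exp_log hkpos]
        rw [h0, ← Real.exp_nat_mul]
        ring_nf
      rw [hlamk, hkk, div_mul_eq_div_div_swap, ← Real.exp_add, ← Real.exp_sub, hLdef]
      congr 1
      ring
    rw [heq] at hstep1
    have hsqk : (1:ℝ) ≤ Real.sqrt k := by
      rw [show (1:ℝ) = Real.sqrt 1 by simp]
      exact Real.sqrt_le_sqrt hk1
    have hsqkpos : (0:ℝ) < Real.sqrt k := by linarith
    have hLle : L ≤ 0 := by
      have hlog : Real.log lam - Real.log k = Real.log (lam / k) :=
        (Real.log_div (by positivity) (by positivity)).symm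
      have h1 : Real.log (lam / k) ≤ lam / k - 1 := Real.log_le_sub_one_of_pos (by positivity)
      have h2 : (k:ℝ) * (Real.log lam - Real.log k) ≤ lam - k := by
        rw [hlog]
        calc (k:ℝ) * Real.log (lam / k) ≤ k * (lam / k - 1) :=
              mul_le_mul_of_nonneg_left h1 (by positivity)
          _ = lam - k := by field_simp
      nlinarith [h2]
    by_cases hcase : lam ≤ 2 * k
    · -- large k: exp L ≤ 1 and √lam ≤ √2 * √k
      have hexpL : Real.exp L ≤ 1 := Real.exp_le_one_iff.mpr hLle
      have hsl : Real.sqrt lam ≤ Real.sqrt 2 * Real.sqrt k := by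
        rw [← Real.sqrt_mul (by norm_num)]
        exact Real.sqrt_le_sqrt hcase
      have hmain : Real.exp L / Real.sqrt k ≤ Real.sqrt 2 / Real.sqrt lam := by
        rw [div_le_div_iff₀ hsqkpos (Real.sqrt_pos.mpr hlam0)]
        calc Real.exp L * Real.sqrt lam ≤ 1 * Real.sqrt lam :=
              mul_le_mul_of_nonneg_right hexpL (Real.sqrt_nonneg _)
          _ = Real.sqrt lam := one_mul _
          _ ≤ Real.sqrt 2 * Real.sqrt k := hsl
      unfold pmfBound
      linarith [hstep1.trans hmain]
    · -- small k: 2k < lam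
      push_neg at hcase
      have hk2 : (k:ℝ) ≤ lam / 2 := by linarith
      have hloge : Real.log (lam / k) ≤ lam / (k * Real.exp 1) := by
        have h1 : Real.log (lam / (k * Real.exp 1)) ≤ lam / (k * Real.exp 1) - 1 :=
          Real.log_le_sub_one_of_pos (by positivity)
        have h2 : Real.log (lam / (k * Real.exp 1)) = Real.log (lam / k) - 1 := by
          rw [show lam / (k * Real.exp 1) = (lam / k) / Real.exp 1 by ring,
            Real.log_div (by positivity) (Real.exp_ne_zero 1), Real.log_exp]
        linarith
      have hklog : (k:ℝ) * (Real.log lam - Real.log k) ≤ lam * (Real.exp 1)⁻¹ := by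
        have hlog : Real.log lam - Real.log k = Real.log (lam / k) :=
          (Real.log_div (by positivity) (by positivity)).symm
        rw [hlog]
        calc (k:ℝ) * Real.log (lam / k) ≤ k * (lam / (k * Real.exp 1)) :=
              mul_le_mul_of_nonneg_left hloge (by positivity)
          _ = lam * (Real.exp 1)⁻¹ := by field_simp
      have hLle2 : L ≤ ((Real.exp 1)⁻¹ - 1/2) * lam := by
        have : L = k * (Real.log lam - Real.log k) + k - lam := by rw [hLdef]; ring
        rw [this]
        nlinarith [hklog, hk2]
      have hmain : Real.exp L / Real.sqrt k ≤ Real.exp (((Real.exp 1)⁻¹ - 1/2) * lam) := by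
        calc Real.exp L / Real.sqrt k ≤ Real.exp L / 1 :=
              div_le_div_of_nonneg_left (Real.exp_pos _).le one_pos hsqk
          _ = Real.exp L := div_one _
          _ ≤ Real.exp (((Real.exp 1)⁻¹ - 1/2) * lam) := Real.exp_le_exp.mpr hLle2
      unfold pmfBound
      linarith [hstep1.trans hmain]

lemma summable_poissonPmf (lam : ℝ) : Summable (poissonPmf lam) := by
  have h := (Real.summable_pow_div_factorial lam).mul_left (Real.exp (-lam))
  exact h.congr fun k => by rw [poissonPmf, mul_div_assoc]

lemma tsum_poissonPmf (lam : ℝ) : ∑' k, poissonPmf lam k = 1 := by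
  have hexp : ∑' n : ℕ, lam ^ n / n ! = Real.exp lam := by
    rw [Real.exp_eq_exp_ℝ, NormedSpace.exp_eq_tsum_div]
  simp only [poissonPmf, mul_div_assoc]
  rw [tsum_mul_left, hexp, ← Real.exp_add]
  simp

lemma drawProb_eq (lam : ℝ) : drawProb lam = ∑' k, (poissonPmf lam k) ^ 2 := by
  rw [drawProb, ← tsum_mul_left]
  refine tsum_congr fun k => ?_
  rw [poissonPmf, div_pow, mul_pow, ← Real.exp_nat_mul, pow_mul]
  norm_num
  ring_nf

/-- `d(λ) → 0` as `λ → ∞`. -/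
theorem drawProb_tendsto_zero :
    Filter.Tendsto drawProb Filter.atTop (nhds 0) := by
  apply squeeze_zero' ?_ ?_ pmfBound_tendsto_zero
  · filter_upwards with lam
    rw [drawProb_eq]
    exact tsum_nonneg fun k => sq_nonneg _
  · filter_upwards [eventually_ge_atTop (2:ℝ)] with lam hlam
    have hnn : ∀ k, 0 ≤ poissonPmf lam k := fun k => by
      have : (0:ℝ) < lam := by linarith
      unfold poissonPmf
      positivity
    have hboundmul : ∀ k, (poissonPmf lam k) ^ 2 ≤ pmfBound lam * poissonPmf lam k := fun k => by
      rw [sq]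
      exact mul_le_mul_of_nonneg_right (poissonPmf_le_pmfBound hlam k) (hnn k)
    have hs1 : Summable (fun k => pmfBound lam * poissonPmf lam k) :=
      (summable_poissonPmf lam).mul_left _
    have hs2 : Summable (fun k => (poissonPmf lam k) ^ 2) :=
      Summable.of_nonneg_of_le (fun k => sq_nonneg _) hboundmul hs1
    rw [drawProb_eq]
    calc ∑' k, (poissonPmf lam k) ^ 2 ≤ ∑' k, pmfBound lam * poissonPmf lam k :=
          Summable.tsum_le_tsum hboundmul hs2 hs1
      _ = pmfBound lam * ∑' k, poissonPmf lam k := tsum_mul_left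
      _ = pmfBound lam := by rw [tsum_poissonPmf]; ring
end
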